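/- Let E be finite and H ⊆ ℓ²(E) a subspace with orthogonal complement H^⊥. Then for every B ⊆ E, P^{H^⊥}({E \ B}) = P^H({B}), where P^H is the determinantal measure associated to H. -/

import Mathlib

open Matrix
open scoped RealInnerProductSpace

lemma auxB {m k : Type*} [DecidableEq m] [Fintype m] [DecidableEq k] [Fintype k]
    (X : Matrix (m ⊕ k) (m ⊕ k) ℝ) (hX : X * Xᵀ = 1) :
    (X.toBlocks₁₁).det ^ 2 = (X.toBlocks₂₂).det ^ 2 := by
  set P := X.toBlocks₁₁; set Q := X.toBlocks₁₂; set S := X.toBlocks₂₁; set T := X.toBlocks₂₂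
  have hXb : X = Matrix.fromBlocks P Q S T := (Matrix.fromBlocks_toBlocks X).symm
  have hXdet : X.det ^ 2 = 1 := by
    have := congrArg Matrix.det hX
    rwa [Matrix.det_mul, Matrix.det_transpose, Matrix.det_one, ← sq] at this
  have hmul : X * Xᵀ = Matrix.fromBlocks (P * Pᵀ + Q * Qᵀ) (P * Sᵀ + Q * Tᵀ)
      (S * Pᵀ + T * Qᵀ) (S * Sᵀ + T * Tᵀ) := by
    rw [hXb, Matrix.fromBlocks_transpose, Matrix.fromBlocks_multiply]
  have hmul' : Matrix.fromBlocks (1 : Matrix m m ℝ) 0 0 (1 : Matrix k k ℝ)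
      = Matrix.fromBlocks (P * Pᵀ + Q * Qᵀ) (P * Sᵀ + Q * Tᵀ) (S * Pᵀ + T * Qᵀ) (S * Sᵀ + T * Tᵀ) := by
    rw [Matrix.fromBlocks_one, ← hX, hmul]
  have h11 : P * Pᵀ + Q * Qᵀ = 1 := by
    simpa only [Matrix.toBlocks_fromBlocks₁₁] using (congrArg Matrix.toBlocks₁₁ hmul').symm
  have h21 : S * Pᵀ + T * Qᵀ = 0 := by
    simpa only [Matrix.toBlocks_fromBlocks₂₁] using (congrArg Matrix.toBlocks₂₁ hmul').symm
  have key : X.det * P.det = T.det := by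
    have hprod : X * Matrix.fromBlocks Pᵀ 0 Qᵀ 1 = Matrix.fromBlocks 1 Q 0 T := by
      rw [hXb, Matrix.fromBlocks_multiply]
      congr 1 <;> simp [h11, h21]
    have := congrArg Matrix.det hprod
    rwa [Matrix.det_mul, Matrix.det_fromBlocks_zero₁₂, Matrix.det_fromBlocks_zero₂₁,
      Matrix.det_transpose, Matrix.det_one, Matrix.det_one, mul_one, one_mul] at this
  calc P.det ^ 2 = X.det ^ 2 * P.det ^ 2 := by rw [hXdet, one_mul]
    _ = (X.det * P.det) ^ 2 := by ring
    _ = T.det ^ 2 := by rw [key]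

lemma auxA {E W : Type*} [Fintype E] {m : ℕ}
    [NormedAddCommGroup W] [InnerProductSpace ℝ W]
    (K : Submodule ℝ (EuclideanSpace ℝ E))
    (b : OrthonormalBasis (Fin m) ℝ K)
    (w : MultilinearMap ℝ (fun _ : Fin m => EuclideanSpace ℝ E) W)
    (hw : ∀ u v, (inner ℝ (w u) (w v) : ℝ)
      = (Matrix.of fun i j => (inner ℝ (u i) (v j) : ℝ)).det)
    (ξ : W)
    (hmem : ξ ∈ Submodule.span ℝ
      {x : W | ∃ v : Fin m → EuclideanSpace ℝ E, (∀ i, v i ∈ K) ∧ w v = x})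
    (hξ : ‖ξ‖ = 1)
    (t : Fin m → EuclideanSpace ℝ E) :
    (inner ℝ ξ (w t) : ℝ) ^ 2
      = (Matrix.of fun i j =>
          (inner ℝ ((b i : EuclideanSpace ℝ E)) (t j) : ℝ)).det ^ 2 := by
  classical
  set u : Fin m → EuclideanSpace ℝ E := fun i => (b i : EuclideanSpace ℝ E) with hu
  -- w vanishes on families with a repeated entry
  have hzero : ∀ (v : Fin m → EuclideanSpace ℝ E) (i j : Fin m),
      v i = v j → i ≠ j → w v = 0 := by
    intro v i j hv hij
    have h1 : (inner ℝ (w v) (w v) : ℝ) = 0 := by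
      rw [hw]
      apply Matrix.det_zero_of_row_eq hij
      funext k
      simp [hv]
    rwa [inner_self_eq_zero] at h1
  have hbo := b.orthonormal
  have hortho : ∀ i j : Fin m, (inner ℝ (u i) (u j) : ℝ) = if i = j then 1 else 0 := by
    intro i j
    have : (inner ℝ (u i) (u j) : ℝ) = (inner ℝ (b i) (b j) : ℝ) := rfl
    rw [this, orthonormal_iff_ite.mp hbo]
  have huu : (inner ℝ (w u) (w u) : ℝ) = 1 := by
    rw [hw]
    have : (Matrix.of fun i j => (inner ℝ (u i) (u j) : ℝ)) = (1 : Matrix (Fin m) (Fin m) ℝ) := by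
      funext i j
      simp [hortho, Matrix.one_apply]
    rw [this, Matrix.det_one]
  -- span of the wedge set is contained in the span of `w u`
  have hspan : Submodule.span ℝ
      {x : W | ∃ v : Fin m → EuclideanSpace ℝ E, (∀ i, v i ∈ K) ∧ w v = x}
      ≤ Submodule.span ℝ {w u} := by
    rw [Submodule.span_le]
    rintro x ⟨v, hv, rfl⟩
    have hrep : ∀ i, v i = ∑ j, (b.repr ⟨v i, hv i⟩ j) • u j := by
      intro i
      have h2 := b.sum_repr ⟨v i, hv i⟩
      have h3 : v i = ((∑ j, b.repr ⟨v i, hv i⟩ j • b j : K) : EuclideanSpace ℝ E) := by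
        rw [h2]
      refine h3.trans ?_
      push_cast
      rfl
    have hexp : w v = ∑ k : Fin m → Fin m,
        (∏ i, b.repr ⟨v i, hv i⟩ (k i)) • w (fun i => u (k i)) := by
      have : w v = w (fun i => ∑ j, (b.repr ⟨v i, hv i⟩ j) • u j) := by
        congr 1; funext i; exact hrep i
      rw [this, w.map_sum]
      congr 1
      funext k
      exact w.map_smul_univ _ _
    rw [hexp]
    apply Submodule.sum_mem
    intro k _
    by_cases hk : Function.Injective k
    · have hbij : Function.Bijective k := Finite.injective_iff_bijective.mp hk
      set σ := Equiv.ofBijective k hbij with hσ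
      have hcomp : (fun i => u (k i)) = u ∘ σ := rfl
      -- alternating map structure
      let wa : (EuclideanSpace ℝ E) [⋀^Fin m]→ₗ[ℝ] W :=
        ⟨w, by intro v i j h hij; exact hzero v i j h hij⟩
      have hperm : w (fun i => u (k i)) = (Equiv.Perm.sign σ : ℤˣ) • w u := by
        have h5 : wa (u ∘ σ) = (Equiv.Perm.sign σ : ℤˣ) • wa u := wa.map_perm u σ
        have h6 : wa (u ∘ σ) = w (fun i => u (k i)) := rfl
        have h7 : wa u = w u := rfl
        rw [h6, h7] at h5
        exact h5
      have hmem1 : w u ∈ Submodule.span ℝ {w u} := Submodule.mem_span_singleton_self _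
      rcases Int.units_eq_one_or (Equiv.Perm.sign σ) with hs | hs
      · rw [hperm, hs, one_smul]
        exact Submodule.smul_mem _ _ hmem1
      · rw [hperm, hs]
        have : (-1 : ℤˣ) • w u = -(w u) := by simp
        rw [this, smul_neg]
        exact Submodule.neg_mem _ (Submodule.smul_mem _ _ hmem1)
    · obtain ⟨i, j, hkeq, hij⟩ := Function.not_injective_iff.mp hk
      have : w (fun i => u (k i)) = 0 := hzero _ i j (by rw [hkeq]) hij
      rw [this, smul_zero]
      exact Submodule.zero_mem _
  obtain ⟨c, hc⟩ := Submodule.mem_span_singleton.mp (hspan hmem)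
  have hc2 : c ^ 2 = 1 := by
    have h4 : (inner ℝ ξ ξ : ℝ) = 1 := by
      rw [real_inner_self_eq_norm_sq, hξ, one_pow]
    rw [← hc, real_inner_smul_left, real_inner_smul_right, huu] at h4
    calc c ^ 2 = c * (c * 1) := by ring
      _ = 1 := h4
  rw [← hc, real_inner_smul_left, hw, mul_pow, hc2, one_mul]


/-- Duality: `P^{H^⊥}({E ∖ B}) = P^H({B})` for every `B ⊆ E`.  Here `W` with `w`
models `Λʳ ℓ²(E)` (`r = dim H`) and `W'` with `w'` models `Λ^{|E|−r} ℓ²(E)`, both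
with the determinantal inner product; `ξ` and `ξ'` are unit multivectors of `H`
and `H^⊥` respectively; and `P^H({B}) = |⟨ξ, θ_B⟩|²` when `|B| = r`, else `0`. -/
theorem stmt13 {E W W' : Type*} [Fintype E] [LinearOrder E]
    [NormedAddCommGroup W] [InnerProductSpace ℝ W]
    [NormedAddCommGroup W'] [InnerProductSpace ℝ W']
    (H : Submodule ℝ (EuclideanSpace ℝ E)) {r : ℕ} (hH : Module.finrank ℝ H = r)
    (w : MultilinearMap ℝ (fun _ : Fin r => EuclideanSpace ℝ E) W)
    (hw : ∀ u v, (inner ℝ (w u) (w v) : ℝ)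
      = (Matrix.of fun i j => (inner ℝ (u i) (v j) : ℝ)).det)
    (w' : MultilinearMap ℝ (fun _ : Fin (Fintype.card E - r) => EuclideanSpace ℝ E) W')
    (hw' : ∀ u v, (inner ℝ (w' u) (w' v) : ℝ)
      = (Matrix.of fun i j => (inner ℝ (u i) (v j) : ℝ)).det)
    (ξ : W)
    (hξmem : ξ ∈ Submodule.span ℝ
      {x : W | ∃ v : Fin r → EuclideanSpace ℝ E, (∀ i, v i ∈ H) ∧ w v = x})
    (hξ : ‖ξ‖ = 1)
    (ξ' : W')
    (hξ'mem : ξ' ∈ Submodule.span ℝ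
      {x : W' | ∃ v : Fin (Fintype.card E - r) → EuclideanSpace ℝ E,
        (∀ i, v i ∈ Hᗮ) ∧ w' v = x})
    (hξ' : ‖ξ'‖ = 1)
    (B : Finset E) :
    (if h : Bᶜ.card = Fintype.card E - r then
        (inner ℝ ξ' (w' (fun i => EuclideanSpace.single (Bᶜ.orderEmbOfFin h i) (1:ℝ))) : ℝ) ^ 2
      else 0)
    = (if h : B.card = r then
        (inner ℝ ξ (w (fun i => EuclideanSpace.single (B.orderEmbOfFin h i) (1:ℝ))) : ℝ) ^ 2
      else 0) := by
  classical
  have hrn : r ≤ Fintype.card E := by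
    have h1 : Module.finrank ℝ H ≤ Module.finrank ℝ (EuclideanSpace ℝ E) := H.finrank_le
    rwa [hH, finrank_euclideanSpace] at h1
  have hBle : B.card ≤ Fintype.card E := Finset.card_le_univ B
  have hcompl : Bᶜ.card = Fintype.card E - B.card := Finset.card_compl B
  by_cases hB : B.card = r
  · have hBc : Bᶜ.card = Fintype.card E - r := by rw [hcompl, hB]
    rw [dif_pos hB, dif_pos hBc]
    have hfH : Module.finrank ℝ Hᗮ = Fintype.card E - r := by
      have h2 := Submodule.finrank_add_finrank_orthogonal (K := H)
      rw [hH, finrank_euclideanSpace] at h2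
      omega
    let b : OrthonormalBasis (Fin r) ℝ H := (stdOrthonormalBasis ℝ H).reindex (finCongr hH)
    let b' : OrthonormalBasis (Fin (Fintype.card E - r)) ℝ Hᗮ :=
      (stdOrthonormalBasis ℝ Hᗮ).reindex (finCongr hfH)
    rw [auxA H b w hw ξ hξmem hξ, auxA Hᗮ b' w' hw' ξ' hξ'mem hξ']
    -- the big orthogonal matrix
    have hcard : Fintype.card (Fin r ⊕ Fin (Fintype.card E - r)) = Fintype.card E := by
      simp only [Fintype.card_sum, Fintype.card_fin]
      omega
    set g : Fin r ⊕ Fin (Fintype.card E - r) → E :=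
      Sum.elim (fun i => B.orderEmbOfFin hB i) (fun i => Bᶜ.orderEmbOfFin hBc i) with hg
    have hgmem1 : ∀ i, g (Sum.inl i) ∈ B := fun i => B.orderEmbOfFin_mem hB i
    have hgmem2 : ∀ i, g (Sum.inr i) ∉ B := fun i =>
      Finset.mem_compl.mp (Bᶜ.orderEmbOfFin_mem hBc i)
    have hginj : Function.Injective g := by
      rintro (i | i) (j | j) hij
      · exact congrArg Sum.inl ((B.orderEmbOfFin hB).injective hij)
      · exact absurd (hij ▸ hgmem1 i) (hgmem2 j)
      · exact absurd (hij ▸ hgmem2 i) (not_not_intro (hgmem1 j))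
      · exact congrArg Sum.inr ((Bᶜ.orderEmbOfFin hBc).injective hij)
    have hgbij : Function.Bijective g :=
      (Fintype.bijective_iff_injective_and_card g).mpr ⟨hginj, hcard⟩
    set vec : Fin r ⊕ Fin (Fintype.card E - r) → EuclideanSpace ℝ E :=
      Sum.elim (fun i => (b i : EuclideanSpace ℝ E)) (fun i => (b' i : EuclideanSpace ℝ E))
      with hvec
    set X : Matrix (Fin r ⊕ Fin (Fintype.card E - r)) (Fin r ⊕ Fin (Fintype.card E - r)) ℝ :=
      Matrix.of fun p q => vec p (g q) with hXdef
    have hinner : ∀ p q, (X * Xᵀ) p q = (inner ℝ (vec p) (vec q) : ℝ) := by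
      intro p q
      have h3 : (X * Xᵀ) p q = ∑ j, vec p (g j) * vec q (g j) := by
        simp [Matrix.mul_apply, hXdef]
      have h4 : ∑ j, vec p (g j) * vec q (g j) = ∑ e : E, vec p e * vec q e :=
        Fintype.sum_bijective g hgbij _ _ (fun j => rfl)
      rw [h3, h4, PiLp.inner_apply]
      simp
      exact Finset.sum_congr rfl (fun _ _ => mul_comm _ _)
    have hX : X * Xᵀ = 1 := by
      ext p q
      rw [hinner p q]
      have hbH : ∀ i, (b i : EuclideanSpace ℝ E) ∈ H := fun i => (b i).2
      have hbH' : ∀ i, (b' i : EuclideanSpace ℝ E) ∈ Hᗮ := fun i => (b' i).2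
      rcases p with i | i <;> rcases q with j | j
      · have : (inner ℝ (vec (Sum.inl i)) (vec (Sum.inl j)) : ℝ)
            = (inner ℝ (b i) (b j) : ℝ) := rfl
        rw [this, orthonormal_iff_ite.mp b.orthonormal]
        simp [Matrix.one_apply]
      · have : (inner ℝ (vec (Sum.inl i)) (vec (Sum.inr j)) : ℝ) = 0 :=
          Submodule.inner_right_of_mem_orthogonal (hbH i) (hbH' j)
        rw [this]
        simp [Matrix.one_apply]
      · have : (inner ℝ (vec (Sum.inr i)) (vec (Sum.inl j)) : ℝ) = 0 := by
          rw [real_inner_comm]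
          exact Submodule.inner_right_of_mem_orthogonal (hbH j) (hbH' i)
        rw [this]
        simp [Matrix.one_apply]
      · have : (inner ℝ (vec (Sum.inr i)) (vec (Sum.inr j)) : ℝ)
            = (inner ℝ (b' i) (b' j) : ℝ) := rfl
        rw [this, orthonormal_iff_ite.mp b'.orthonormal]
        simp [Matrix.one_apply]
    have hM : (Matrix.of fun i j => (inner ℝ ((b i : EuclideanSpace ℝ E))
        (EuclideanSpace.single (B.orderEmbOfFin hB j) (1:ℝ)) : ℝ)) = X.toBlocks₁₁ := by
      funext i j
      have h9 : g (Sum.inl j) = B.orderEmbOfFin hB j := rfl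
      rw [Matrix.of_apply, EuclideanSpace.inner_single_right]
      simp only [Matrix.toBlocks₁₁, hXdef, hvec, Matrix.of_apply, Sum.elim_inl]
      simp
      exact congrArg _ h9.symm
    have hM' : (Matrix.of fun i j => (inner ℝ ((b' i : EuclideanSpace ℝ E))
        (EuclideanSpace.single (Bᶜ.orderEmbOfFin hBc j) (1:ℝ)) : ℝ)) = X.toBlocks₂₂ := by
      funext i j
      have h9 : g (Sum.inr j) = Bᶜ.orderEmbOfFin hBc j := rfl
      rw [Matrix.of_apply, EuclideanSpace.inner_single_right]
      simp only [Matrix.toBlocks₂₂, hXdef, hvec, Matrix.of_apply, Sum.elim_inr]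
      simp
      exact congrArg _ h9.symm
    rw [hM, hM']
    exact (auxB X hX).symm
  · have hBc : ¬ Bᶜ.card = Fintype.card E - r := by omega
    rw [dif_neg hB, dif_neg hBc]
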